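/- Let κ be a regular cardinal and μ a (κ,κ⁺)-cardinal. If X, Y ∈ μ have the same rank (in the well-founded order of μ under inclusion) and α ∈ X ∩ Y, then X ∩ α = Y ∩ α. -/

import Mathlib

open Set Cardinal Ordinal

noncomputable section

/-- Lower a (small) ordinal of `Ordinal.{1}` to `Ordinal.{0}` (the inverse of `Ordinal.lift`
on its range). -/
noncomputable def olower (o : Ordinal.{1}) : Ordinal.{0} :=
  sInf {a : Ordinal.{0} | Ordinal.lift.{1} a = o}

/-- The order type of a set of ordinals. -/
noncomputable def otp (A : Set Ordinal.{0}) : Ordinal.{0} :=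
  olower (@Ordinal.type _ (Subrel ((· < ·) : Ordinal → Ordinal → Prop) A)
    (inferInstanceAs (IsWellOrder _ (Subrel ((· < ·) : Ordinal → Ordinal → Prop) (· ∈ A)))))

/-- The canonical order-preserving transfer map from a set of ordinals `X` to a set of
ordinals `Y` of the same order type: an element `a ∈ X` is sent to the unique element of `Y`
occupying the same position. -/
noncomputable def omap (X Y : Set Ordinal) (a : Ordinal) : Ordinal :=
  sInf {b | b ∈ Y ∧ otp (Y ∩ Set.Iio b) = otp (X ∩ Set.Iio a)}

/-- `IsStar X₁ X₂ X` says `X = X₁ * X₂`: `X₁` and `X₂` have the same order type,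
`X = X₁ ∪ X₂`, and `X₁ ∩ X₂ < X₁ \ X₂ < X₂ \ X₁` elementwise. -/
def IsStar (X₁ X₂ X : Set Ordinal) : Prop :=
  otp X₁ = otp X₂ ∧ X = X₁ ∪ X₂ ∧
  (∀ a ∈ X₁ ∩ X₂, ∀ b ∈ X₁ \ X₂, a < b) ∧
  (∀ b ∈ X₁ \ X₂, ∀ c ∈ X₂ \ X₁, b < c)

set_option linter.deprecated false in
/-- A `(κ,κ⁺)`-cardinal (a neat simplified `(κ,1)`-morass presented as a family of sets):
a family `μ ⊆ ℘_κ(κ⁺)` which is well-founded under strict inclusion, locally small,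
homogeneous, directed, locally almost directed, covers `κ⁺` and is neat. -/
structure TwoCardinal (κ : Cardinal.{0}) where
  mu : Set (Set Ordinal)
  mem_sub : ∀ X ∈ mu, X ⊆ Set.Iio (Order.succ κ).ord
  mem_small : ∀ X ∈ mu, (otp X).card < κ
  wf : WellFounded fun X Y : mu => (X : Set Ordinal) ⊂ (Y : Set Ordinal)
  locSmall : ∀ X : mu,
    #{Z : mu // (Z : Set Ordinal) ⊂ (X : Set Ordinal)} < Cardinal.lift.{1} κ
  homog : ∀ X Y : mu, (wf.apply X).rank = (wf.apply Y).rank →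
    otp (X : Set Ordinal) = otp (Y : Set Ordinal) ∧
    {Z | Z ∈ mu ∧ Z ⊂ (Y : Set Ordinal)} =
      (fun Z => omap (X : Set Ordinal) (Y : Set Ordinal) '' Z) ''
        {Z | Z ∈ mu ∧ Z ⊂ (X : Set Ordinal)}
  directed : ∀ X ∈ mu, ∀ Y ∈ mu, ∃ Z ∈ mu, X ⊆ Z ∧ Y ⊆ Z
  locAlmostDirected : ∀ X : mu,
    (∀ Z₁ ∈ mu, ∀ Z₂ ∈ mu, Z₁ ⊂ (X : Set Ordinal) → Z₂ ⊂ (X : Set Ordinal) →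
      ∃ Z ∈ mu, Z ⊂ (X : Set Ordinal) ∧ Z₁ ⊆ Z ∧ Z₂ ⊆ Z) ∨
    (∃ X₁ X₂ : mu, (wf.apply X₁).rank = (wf.apply X₂).rank ∧
      IsStar (X₁ : Set Ordinal) (X₂ : Set Ordinal) (X : Set Ordinal) ∧
      {Z | Z ∈ mu ∧ Z ⊂ (X : Set Ordinal)} =
        {Z | Z ∈ mu ∧ Z ⊂ (X₁ : Set Ordinal)} ∪ {Z | Z ∈ mu ∧ Z ⊂ (X₂ : Set Ordinal)} ∪
          {(X₁ : Set Ordinal), (X₂ : Set Ordinal)})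
  covers : ⋃₀ mu = Set.Iio (Order.succ κ).ord
  neat : ∀ X : mu, (wf.apply X).rank ≠ 0 →
    (X : Set Ordinal) = ⋃₀ {Z | Z ∈ mu ∧ Z ⊂ (X : Set Ordinal)}

namespace TwoCardinal

variable {κ : Cardinal} (M : TwoCardinal κ)

set_option linter.deprecated false in
/-- The rank of an element of `μ` in the well-founded order `(μ, ⊂)`. -/
noncomputable def rank (X : M.mu) : Ordinal := olower ((M.wf.apply X).rank)

/-- The height of the well-founded order `(μ, ⊂)`. -/
noncomputable def ht : Ordinal := sSup (Set.range fun X : M.mu => M.rank X + 1)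

/-- The term `μ_ξ(α)` of the μ-sequence at `α`: equal to `X ∩ α` for any `X ∈ μ` of
rank `ξ` containing `α` (this is independent of the choice of `X`). -/
noncomputable def seq (α ξ : Ordinal) : Set Ordinal :=
  ⋃₀ {S | ∃ X : M.mu, M.rank X = ξ ∧ α ∈ (X : Set Ordinal) ∧
    S = (X : Set Ordinal) ∩ Set.Iio α}

/-- The μ-coloring `m(α,β) = min{rank X : α, β ∈ X ∈ μ}`. -/
noncomputable def mcol (a b : Ordinal) : Ordinal :=
  sInf {ξ | ∃ X : M.mu, M.rank X = ξ ∧ a ∈ (X : Set Ordinal) ∧ b ∈ (X : Set Ordinal)}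

end TwoCardinal

section CoherenceHelpers

set_option linter.deprecated false

/-! ### Basic facts about `olower` and `otp` -/

theorem olower_lift (a : Ordinal.{0}) : olower (Ordinal.lift.{1} a) = a := by
  have h : {x : Ordinal.{0} | Ordinal.lift.{1} x = Ordinal.lift.{1} a} = {a} := by
    ext x
    simp [Ordinal.lift_inj]
  rw [olower, h, csInf_singleton]

theorem lift_olower_type {α : Type 1} (r : α → α → Prop) [IsWellOrder α r] [Small.{0} α] :
    Ordinal.lift.{1} (olower (Ordinal.type r)) = Ordinal.type r := by
  let e := (equivShrink.{0} α).symm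
  letI : IsWellOrder (Shrink α) (⇑e ⁻¹'o r) := (RelIso.preimage e r).toRelEmbedding.isWellOrder
  have h : Ordinal.lift.{1} (Ordinal.type (⇑e ⁻¹'o r)) = Ordinal.type r := by
    have h2 := Ordinal.lift_type_eq.{0, 1, 1}.2 ⟨RelIso.preimage e r⟩
    rwa [Ordinal.lift_id (Ordinal.type r)] at h2
  rw [← h, olower_lift]

theorem small_Iio_ordinal (o : Ordinal.{0}) : Small.{0} (Set.Iio o) :=
  Small.mk' (Ordinal.ToType.mk (o := o)).toEquiv

theorem small_of_subset_Iio {A : Set Ordinal.{0}} {o : Ordinal.{0}} (h : A ⊆ Set.Iio o) :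
    Small.{0} A :=
  haveI := small_Iio_ordinal o
  small_subset h

theorem otp_lift (A : Set Ordinal.{0}) [Small.{0} A] :
    Ordinal.lift.{1} (otp A) =
      Ordinal.type (Subrel ((· < ·) : Ordinal → Ordinal → Prop) (· ∈ A)) :=
  lift_olower_type (Subrel ((· < ·) : Ordinal → Ordinal → Prop) (· ∈ A))

theorem otp_le_otp {A B : Set Ordinal.{0}} [Small.{0} A] [Small.{0} B] :
    otp A ≤ otp B ↔
      Ordinal.type (Subrel ((· < ·) : Ordinal → Ordinal → Prop) (· ∈ A)) ≤
        Ordinal.type (Subrel ((· < ·) : Ordinal → Ordinal → Prop) (· ∈ B)) := by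
  rw [← Ordinal.lift_le.{1}, otp_lift, otp_lift]

theorem otp_lt_otp {A B : Set Ordinal.{0}} [Small.{0} A] [Small.{0} B] :
    otp A < otp B ↔
      Ordinal.type (Subrel ((· < ·) : Ordinal → Ordinal → Prop) (· ∈ A)) <
        Ordinal.type (Subrel ((· < ·) : Ordinal → Ordinal → Prop) (· ∈ B)) := by
  rw [← Ordinal.lift_lt.{1}, otp_lift, otp_lift]

theorem otp_le_of_subset {A B : Set Ordinal.{0}} [Small.{0} B] (h : A ⊆ B) :
    otp A ≤ otp B := by
  haveI : Small.{0} A := small_subset h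
  rw [otp_le_otp]
  exact Ordinal.type_le_iff'.2
    ⟨⟨⟨Set.inclusion h, Set.inclusion_injective h⟩, Iff.rfl⟩⟩

/-- The relational isomorphism identifying `B ∩ Iio b` with the initial segment of `B`
determined by `b ∈ B`. -/
def interIso (B : Set Ordinal.{0}) (b : B) :
    Subrel (Subrel ((· < ·) : Ordinal → Ordinal → Prop) (· ∈ B))
        (fun x => Subrel ((· < ·) : Ordinal → Ordinal → Prop) (· ∈ B) x b) ≃r
      Subrel ((· < ·) : Ordinal → Ordinal → Prop) (· ∈ (B ∩ Set.Iio (b : Ordinal))) where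
  toFun x := ⟨(x : B), (x : B).2, x.2⟩
  invFun x := ⟨⟨(x : Ordinal), x.2.1⟩, x.2.2⟩
  left_inv x := rfl
  right_inv x := rfl
  map_rel_iff' := Iff.rfl

theorem type_inter_Iio {B : Set Ordinal.{0}} {b : Ordinal} (hb : b ∈ B) :
    Ordinal.type (Subrel ((· < ·) : Ordinal → Ordinal → Prop) (· ∈ (B ∩ Set.Iio b))) =
      Ordinal.typein (Subrel ((· < ·) : Ordinal → Ordinal → Prop) (· ∈ B)) ⟨b, hb⟩ := by
  rw [← Ordinal.type_subrel]
  exact (Ordinal.type_eq.2 ⟨interIso B ⟨b, hb⟩⟩).symm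

theorem otp_Iio_lt {B : Set Ordinal.{0}} [Small.{0} B] {b : Ordinal} (hb : b ∈ B) :
    otp (B ∩ Set.Iio b) < otp B := by
  haveI : Small.{0} (B ∩ Set.Iio b : Set Ordinal) := small_subset Set.inter_subset_left
  rw [otp_lt_otp, type_inter_Iio hb]
  exact Ordinal.typein_lt_type _ _

theorem otp_Iio_lt_Iio {B : Set Ordinal.{0}} [Small.{0} B] {b c : Ordinal} (hb : b ∈ B)
    (hbc : b < c) : otp (B ∩ Set.Iio b) < otp (B ∩ Set.Iio c) := by
  haveI : Small.{0} (B ∩ Set.Iio c : Set Ordinal) := small_subset Set.inter_subset_left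
  have h := otp_Iio_lt (B := B ∩ Set.Iio c) (b := b) ⟨hb, hbc⟩
  rwa [Set.inter_assoc, Set.Iio_inter_Iio, min_eq_right hbc.le] at h

theorem otp_Iio_mono {B : Set Ordinal.{0}} [Small.{0} B] {b c : Ordinal} (h : b ≤ c) :
    otp (B ∩ Set.Iio b) ≤ otp (B ∩ Set.Iio c) := by
  haveI : Small.{0} (B ∩ Set.Iio c : Set Ordinal) := small_subset Set.inter_subset_left
  exact otp_le_of_subset (Set.inter_subset_inter_right _ (Set.Iio_subset_Iio h))

theorem otp_surj {B : Set Ordinal.{0}} [Small.{0} B] {ξ : Ordinal} (h : ξ < otp B) :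
    ∃ b ∈ B, otp (B ∩ Set.Iio b) = ξ := by
  have h2 : Ordinal.lift.{1} ξ <
      Ordinal.type (Subrel ((· < ·) : Ordinal → Ordinal → Prop) (· ∈ B)) := by
    rw [← otp_lift]
    exact Ordinal.lift_lt.2 h
  obtain ⟨a, ha⟩ := Ordinal.typein_surj _ h2
  refine ⟨(a : Ordinal), a.2, ?_⟩
  haveI : Small.{0} (B ∩ Set.Iio (a : Ordinal) : Set Ordinal) :=
    small_subset Set.inter_subset_left
  apply Ordinal.lift_inj.1
  rw [otp_lift, type_inter_Iio a.2, Subtype.coe_eta, ha]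

/-! ### The transfer map `omap` -/

theorem omap_spec {A B : Set Ordinal.{0}} [Small.{0} A] [Small.{0} B] (h : otp A = otp B)
    {a : Ordinal} (ha : a ∈ A) :
    omap A B a ∈ B ∧ otp (B ∩ Set.Iio (omap A B a)) = otp (A ∩ Set.Iio a) := by
  have hlt : otp (A ∩ Set.Iio a) < otp B := h ▸ otp_Iio_lt ha
  obtain ⟨b, hbB, hb⟩ := otp_surj hlt
  have hne : {b | b ∈ B ∧ otp (B ∩ Set.Iio b) = otp (A ∩ Set.Iio a)}.Nonempty :=
    ⟨b, hbB, hb⟩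
  unfold omap
  exact csInf_mem hne

theorem omap_strictMonoOn {A B : Set Ordinal.{0}} [Small.{0} A] [Small.{0} B]
    (h : otp A = otp B) {a₁ a₂ : Ordinal} (h₁ : a₁ ∈ A) (h₂ : a₂ ∈ A) (hlt : a₁ < a₂) :
    omap A B a₁ < omap A B a₂ := by
  obtain ⟨hb₁, he₁⟩ := omap_spec h h₁
  obtain ⟨hb₂, he₂⟩ := omap_spec h h₂
  by_contra hc
  push_neg at hc
  have h3 : otp (A ∩ Set.Iio a₁) < otp (A ∩ Set.Iio a₂) := otp_Iio_lt_Iio h₁ hlt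
  have h4 : otp (B ∩ Set.Iio (omap A B a₂)) ≤ otp (B ∩ Set.Iio (omap A B a₁)) :=
    otp_Iio_mono hc
  rw [he₁, he₂] at h4
  exact absurd h3 (not_lt.2 h4)

theorem omap_injOn {A B : Set Ordinal.{0}} [Small.{0} A] [Small.{0} B]
    (h : otp A = otp B) : Set.InjOn (omap A B) A := by
  intro x hx y hy hxy
  rcases lt_trichotomy x y with h' | h' | h'
  · exact absurd hxy (ne_of_lt (omap_strictMonoOn h hx hy h'))
  · exact h'
  · exact absurd hxy.symm (ne_of_lt (omap_strictMonoOn h hy hx h'))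

theorem omap_fixed {A B : Set Ordinal.{0}} [Small.{0} A] [Small.{0} B] {β : Ordinal}
    (hseg : A ∩ Set.Iio β = B ∩ Set.Iio β) (hA : β ∈ A) (hB : β ∈ B) :
    omap A B β = β := by
  have hmem : β ∈ {b | b ∈ B ∧ otp (B ∩ Set.Iio b) = otp (A ∩ Set.Iio β)} :=
    ⟨hB, by rw [hseg]⟩
  unfold omap
  refine le_antisymm (csInf_le' hmem) (le_csInf ⟨β, hmem⟩ ?_)
  intro b hb
  by_contra hc
  push_neg at hc
  have hlt := otp_Iio_lt_Iio hb.1 hc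
  rw [hb.2, hseg] at hlt
  exact absurd hlt (lt_irrefl _)

end CoherenceHelpers

section MorassHelpers

set_option linter.deprecated false

variable {κ : Cardinal} (M : TwoCardinal κ)

theorem TwoCardinal.small_mem (X : M.mu) : Small.{0} ((X : Set Ordinal) : Set Ordinal) :=
  small_of_subset_Iio (M.mem_sub _ X.2)

theorem TwoCardinal.rank_liftable (X : M.mu) :
    ∃ a : Ordinal.{0}, Ordinal.lift.{1} a = (M.wf.apply X).rank := by
  refine M.wf.induction
    (C := fun X => ∃ a : Ordinal.{0}, Ordinal.lift.{1} a = (M.wf.apply X).rank) X ?_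
  intro Z IH
  haveI hsmall : Small.{0} {V : M.mu // (V : Set Ordinal) ⊂ (Z : Set Ordinal)} := by
    have hcard := M.locSmall Z
    obtain ⟨c', _, hc'⟩ := Cardinal.lt_lift_iff.1 hcard
    have hmk : Cardinal.lift.{0}
        #{V : M.mu // (V : Set Ordinal) ⊂ (Z : Set Ordinal)} =
        Cardinal.lift.{1} #(Quotient.out c') := by
      rw [Cardinal.lift_uzero, Cardinal.mk_out, ← hc']
    exact Small.mk' (Cardinal.lift_mk_eq'.1 hmk).some
  rw [(M.wf.apply Z).rank_eq]
  choose g hg using fun V : {V : M.mu // (V : Set Ordinal) ⊂ (Z : Set Ordinal)} =>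
    IH V.1 V.2
  have hbdd : BddAbove (Set.range g) := Ordinal.bddAbove_of_small
  have hle : ∀ V : {V : M.mu // (V : Set Ordinal) ⊂ (Z : Set Ordinal)},
      Order.succ ((M.wf.apply V.1).rank) ≤
        Ordinal.lift.{1} (Order.succ (sSup (Set.range g))) := by
    intro V
    rw [← hg V, ← Ordinal.lift_succ]
    exact Ordinal.lift_le.2 (Order.succ_le_succ (le_csSup hbdd ⟨V, rfl⟩))
  exact Ordinal.mem_range_lift_of_le (Ordinal.iSup_le hle)

theorem TwoCardinal.wfrank_eq {X Y : M.mu} (h : M.rank X = M.rank Y) :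
    (M.wf.apply X).rank = (M.wf.apply Y).rank := by
  obtain ⟨a, ha⟩ := M.rank_liftable X
  obtain ⟨b, hb⟩ := M.rank_liftable Y
  unfold TwoCardinal.rank at h
  rw [← ha, ← hb, olower_lift, olower_lift] at h
  rw [← ha, ← hb, h]

theorem TwoCardinal.eq_of_subset_of_rank {U V : M.mu}
    (hsub : (U : Set Ordinal) ⊆ (V : Set Ordinal))
    (hr : (M.wf.apply U).rank = (M.wf.apply V).rank) : (U : Set Ordinal) = (V : Set Ordinal) := by
  by_contra hne
  exact absurd hr
    (ne_of_lt ((M.wf.apply V).rank_lt_of_rel (ssubset_of_subset_of_ne hsub hne)))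

theorem TwoCardinal.rank_omap (X₁ X₂ : M.mu) (hr : (M.wf.apply X₁).rank = (M.wf.apply X₂).rank)
    (Z : M.mu) (hZX : (Z : Set Ordinal) ⊂ (X₁ : Set Ordinal)) (W : M.mu)
    (hW : (W : Set Ordinal) = omap (X₁ : Set Ordinal) (X₂ : Set Ordinal) '' (Z : Set Ordinal)) :
    (M.wf.apply W).rank = (M.wf.apply Z).rank := by
  obtain ⟨hotp, himg⟩ := M.homog X₁ X₂ hr
  haveI i₁ := M.small_mem X₁
  haveI i₂ := M.small_mem X₂
  have hinj : Set.InjOn (omap (X₁ : Set Ordinal) (X₂ : Set Ordinal)) (X₁ : Set Ordinal) :=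
    omap_injOn hotp
  revert hZX W
  refine M.wf.induction (C := fun Z => (Z : Set Ordinal) ⊂ (X₁ : Set Ordinal) →
    ∀ W : M.mu,
      (W : Set Ordinal) = omap (X₁ : Set Ordinal) (X₂ : Set Ordinal) '' (Z : Set Ordinal) →
      (M.wf.apply W).rank = (M.wf.apply Z).rank) Z ?_
  intro Z IH hZX W hW
  have hZmem : (Z : Set Ordinal) ∈ {S | S ∈ M.mu ∧ S ⊂ (X₁ : Set Ordinal)} := ⟨Z.2, hZX⟩
  have hWmem : (W : Set Ordinal) ∈ {S | S ∈ M.mu ∧ S ⊂ (X₂ : Set Ordinal)} := by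
    rw [himg]
    exact ⟨(Z : Set Ordinal), hZmem, hW.symm⟩
  have hWX : (W : Set Ordinal) ⊂ (X₂ : Set Ordinal) := hWmem.2
  rw [(M.wf.apply W).rank_eq, (M.wf.apply Z).rank_eq]
  apply le_antisymm
  · refine Ordinal.iSup_le ?_
    rintro ⟨V, hV⟩
    have hVmem : (V : Set Ordinal) ∈ {S | S ∈ M.mu ∧ S ⊂ (X₂ : Set Ordinal)} :=
      ⟨V.2, hV.trans hWX⟩
    rw [himg] at hVmem
    obtain ⟨U₀, hU₀mem, hU₀x⟩ := hVmem
    have hU₀ : omap (X₁ : Set Ordinal) (X₂ : Set Ordinal) '' U₀ = (V : Set Ordinal) := hU₀x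
    have hUX : U₀ ⊂ (X₁ : Set Ordinal) := hU₀mem.2
    have hUZ : U₀ ⊂ (Z : Set Ordinal) := by
      have himgss : omap (X₁ : Set Ordinal) (X₂ : Set Ordinal) '' U₀ ⊂
          omap (X₁ : Set Ordinal) (X₂ : Set Ordinal) '' (Z : Set Ordinal) := by
        rw [hU₀, ← hW]
        exact hV
      exact (hinj.image_ssubset_image_iff hUX.subset hZX.subset).1 himgss
    have hrkUV : (M.wf.apply V).rank = (M.wf.apply (⟨U₀, hU₀mem.1⟩ : M.mu)).rank :=
      IH ⟨U₀, hU₀mem.1⟩ hUZ hUX V hU₀.symm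
    calc Order.succ ((M.wf.apply V).rank)
        = Order.succ ((M.wf.apply (⟨U₀, hU₀mem.1⟩ : M.mu)).rank) := by rw [hrkUV]
      _ ≤ _ := Ordinal.le_iSup
          (fun b : {b : M.mu // (b : Set Ordinal) ⊂ (Z : Set Ordinal)} =>
            Order.succ ((M.wf.apply b.1).rank)) ⟨⟨U₀, hU₀mem.1⟩, hUZ⟩
  · refine Ordinal.iSup_le ?_
    rintro ⟨U, hU⟩
    have hUmem : (U : Set Ordinal) ∈ {S | S ∈ M.mu ∧ S ⊂ (X₁ : Set Ordinal)} :=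
      ⟨U.2, hU.trans hZX⟩
    have himgU : omap (X₁ : Set Ordinal) (X₂ : Set Ordinal) '' (U : Set Ordinal) ∈
        {S | S ∈ M.mu ∧ S ⊂ (X₂ : Set Ordinal)} := by
      rw [himg]
      exact ⟨(U : Set Ordinal), hUmem, rfl⟩
    have hVW : (⟨_, himgU.1⟩ : M.mu) = (⟨_, himgU.1⟩ : M.mu) := rfl
    have hVWss : omap (X₁ : Set Ordinal) (X₂ : Set Ordinal) '' (U : Set Ordinal) ⊂
        (W : Set Ordinal) := by
      rw [hW]
      exact (hinj.image_ssubset_image_iff hUmem.2.subset hZX.subset).2 hU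
    have hrkUV : (M.wf.apply (⟨_, himgU.1⟩ : M.mu)).rank = (M.wf.apply U).rank :=
      IH U hU hUmem.2 ⟨_, himgU.1⟩ rfl
    calc Order.succ ((M.wf.apply U).rank)
        = Order.succ ((M.wf.apply (⟨_, himgU.1⟩ : M.mu)).rank) := by rw [hrkUV]
      _ ≤ _ := Ordinal.le_iSup
          (fun b : {b : M.mu // (b : Set Ordinal) ⊂ (W : Set Ordinal)} =>
            Order.succ ((M.wf.apply b.1).rank)) ⟨⟨_, himgU.1⟩, hVWss⟩

end MorassHelpers

section MainInduction

set_option linter.deprecated false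

variable {κ : Cardinal} (M : TwoCardinal κ)

theorem TwoCardinal.coh_main (Z : M.mu) :
    ∀ X Y : M.mu, (X : Set Ordinal) ⊆ (Z : Set Ordinal) →
      (Y : Set Ordinal) ⊆ (Z : Set Ordinal) → (M.wf.apply X).rank = (M.wf.apply Y).rank →
      ∀ α : Ordinal, α ∈ (X : Set Ordinal) → α ∈ (Y : Set Ordinal) →
      (X : Set Ordinal) ∩ Set.Iio α = (Y : Set Ordinal) ∩ Set.Iio α := by
  refine M.wf.induction (C := fun Z => ∀ X Y : M.mu,
    (X : Set Ordinal) ⊆ (Z : Set Ordinal) → (Y : Set Ordinal) ⊆ (Z : Set Ordinal) →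
    (M.wf.apply X).rank = (M.wf.apply Y).rank → ∀ α : Ordinal, α ∈ (X : Set Ordinal) →
    α ∈ (Y : Set Ordinal) →
    (X : Set Ordinal) ∩ Set.Iio α = (Y : Set Ordinal) ∩ Set.Iio α) Z ?_
  clear Z
  intro Z IH X Y hXZ hYZ hrk α hX hY
  by_cases hXeq : (X : Set Ordinal) = (Z : Set Ordinal)
  · have hYX : (Y : Set Ordinal) = (X : Set Ordinal) := by
      refine M.eq_of_subset_of_rank ?_ hrk.symm
      rw [hXeq]
      exact hYZ
    rw [hYX]
  by_cases hYeq : (Y : Set Ordinal) = (Z : Set Ordinal)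
  · have hXY : (X : Set Ordinal) = (Y : Set Ordinal) := by
      refine M.eq_of_subset_of_rank ?_ hrk
      rw [hYeq]
      exact hXZ
    rw [hXY]
  have hXss : (X : Set Ordinal) ⊂ (Z : Set Ordinal) := ssubset_of_subset_of_ne hXZ hXeq
  have hYss : (Y : Set Ordinal) ⊂ (Z : Set Ordinal) := ssubset_of_subset_of_ne hYZ hYeq
  rcases M.locAlmostDirected Z with hdir | ⟨X₁, X₂, hr12, hstar, hsplit⟩
  · obtain ⟨Ws, hWmu, hWZ, hXW, hYW⟩ := hdir (X : Set Ordinal) X.2 (Y : Set Ordinal) Y.2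
      hXss hYss
    exact IH ⟨Ws, hWmu⟩ hWZ X Y hXW hYW hrk α hX hY
  · obtain ⟨hotp12, hunion, hc3, hc4⟩ := hstar
    have h1Z : (X₁ : Set Ordinal) ⊂ (Z : Set Ordinal) := by
      have hmem : (X₁ : Set Ordinal) ∈ {S | S ∈ M.mu ∧ S ⊂ (Z : Set Ordinal)} := by
        rw [hsplit]
        exact Or.inr (Set.mem_insert _ _)
      exact hmem.2
    have h2Z : (X₂ : Set Ordinal) ⊂ (Z : Set Ordinal) := by
      have hmem : (X₂ : Set Ordinal) ∈ {S | S ∈ M.mu ∧ S ⊂ (Z : Set Ordinal)} := by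
        rw [hsplit]
        exact Or.inr (Set.mem_insert_iff.2 (Or.inr rfl))
      exact hmem.2
    have hside : ∀ V : M.mu, (V : Set Ordinal) ⊂ (Z : Set Ordinal) →
        (V : Set Ordinal) ⊆ (X₁ : Set Ordinal) ∨ (V : Set Ordinal) ⊆ (X₂ : Set Ordinal) := by
      intro V hV
      have hmem : (V : Set Ordinal) ∈ {S | S ∈ M.mu ∧ S ⊂ (Z : Set Ordinal)} := ⟨V.2, hV⟩
      rw [hsplit] at hmem
      rcases hmem with (⟨_, h⟩ | ⟨_, h⟩) | h
      · exact Or.inl h.subset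
      · exact Or.inr h.subset
      · rcases Set.mem_insert_iff.1 h with h | h
        · exact Or.inl (h ▸ subset_rfl)
        · rw [Set.mem_singleton_iff] at h
          exact Or.inr (h ▸ subset_rfl)
    have hseg : ∀ β : Ordinal, β ∈ (X₁ : Set Ordinal) → β ∈ (X₂ : Set Ordinal) →
        (X₁ : Set Ordinal) ∩ Set.Iio β = (X₂ : Set Ordinal) ∩ Set.Iio β := by
      intro β hβ1 hβ2
      by_cases hd : ((X₁ : Set Ordinal) \ (X₂ : Set Ordinal)) = ∅
      · rw [M.eq_of_subset_of_rank (Set.diff_eq_empty.1 hd) hr12]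
      · obtain ⟨b, hb⟩ := Set.nonempty_iff_ne_empty.2 hd
        ext x
        constructor
        · rintro ⟨hx1, hxlt⟩
          refine ⟨?_, hxlt⟩
          by_contra hx2
          exact absurd (hc3 β ⟨hβ1, hβ2⟩ x ⟨hx1, hx2⟩) (not_lt.2 hxlt.le)
        · rintro ⟨hx2, hxlt⟩
          refine ⟨?_, hxlt⟩
          by_contra hx1
          exact absurd ((hc3 β ⟨hβ1, hβ2⟩ b hb).trans (hc4 b hb x ⟨hx2, hx1⟩))
            (not_lt.2 hxlt.le)
    have cross : ∀ A B : M.mu, (A : Set Ordinal) ⊆ (X₁ : Set Ordinal) →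
        (B : Set Ordinal) ⊆ (X₂ : Set Ordinal) → (M.wf.apply A).rank = (M.wf.apply B).rank →
        α ∈ (A : Set Ordinal) → α ∈ (B : Set Ordinal) →
        (A : Set Ordinal) ∩ Set.Iio α = (B : Set Ordinal) ∩ Set.Iio α := by
      intro A B hA1 hB2 hrAB hαA hαB
      have hα1 : α ∈ (X₁ : Set Ordinal) := hA1 hαA
      have hα2 : α ∈ (X₂ : Set Ordinal) := hB2 hαB
      have hseg' := hseg α hα1 hα2
      by_cases hAeq : (A : Set Ordinal) = (X₁ : Set Ordinal)
      · have hAX : A = X₁ := Subtype.coe_injective hAeq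
        have hBX2 : (B : Set Ordinal) = (X₂ : Set Ordinal) := by
          refine M.eq_of_subset_of_rank hB2 ?_
          rw [← hrAB, hAX, hr12]
        rw [hAeq, hBX2]
        exact hseg'
      · have hAss : (A : Set Ordinal) ⊂ (X₁ : Set Ordinal) :=
          ssubset_of_subset_of_ne hA1 hAeq
        have hBss : (B : Set Ordinal) ⊂ (X₂ : Set Ordinal) := by
          refine ssubset_of_subset_of_ne hB2 ?_
          intro hBeq
          have hB : B = X₂ := Subtype.coe_injective hBeq
          have h1 : (M.wf.apply A).rank < (M.wf.apply X₁).rank := (M.wf.apply X₁).rank_lt_of_rel hAss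
          rw [hrAB, hB, ← hr12] at h1
          exact absurd h1 (lt_irrefl _)
        obtain ⟨hotpH, himg⟩ := M.homog X₁ X₂ hr12
        haveI i₁ := M.small_mem X₁
        haveI i₂ := M.small_mem X₂
        have hBmem : (B : Set Ordinal) ∈ {S | S ∈ M.mu ∧ S ⊂ (X₂ : Set Ordinal)} :=
          ⟨B.2, hBss⟩
        rw [himg] at hBmem
        obtain ⟨B₀, hB₀mem, hB₀x⟩ := hBmem
        have hB₀ : omap (X₁ : Set Ordinal) (X₂ : Set Ordinal) '' B₀ = (B : Set Ordinal) :=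
          hB₀x
        have hB₀X1 : B₀ ⊆ (X₁ : Set Ordinal) := hB₀mem.2.subset
        have hfix : ∀ β ∈ (X₁ : Set Ordinal), β ≤ α →
            omap (X₁ : Set Ordinal) (X₂ : Set Ordinal) β = β := by
          intro β hβ hβα
          rcases eq_or_lt_of_le hβα with rfl | hlt
          · exact omap_fixed hseg' hβ hα2
          · have hβ2 : β ∈ (X₂ : Set Ordinal) := by
              have hmem : β ∈ (X₁ : Set Ordinal) ∩ Set.Iio α := ⟨hβ, hlt⟩
              rw [hseg'] at hmem
              exact hmem.1
            have hsegβ : (X₁ : Set Ordinal) ∩ Set.Iio β =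
                (X₂ : Set Ordinal) ∩ Set.Iio β := by
              have h1 : (X₁ : Set Ordinal) ∩ Set.Iio β =
                  ((X₁ : Set Ordinal) ∩ Set.Iio α) ∩ Set.Iio β := by
                rw [Set.inter_assoc, Set.Iio_inter_Iio, min_eq_right hlt.le]
              rw [h1, hseg', Set.inter_assoc, Set.Iio_inter_Iio, min_eq_right hlt.le]
            exact omap_fixed hsegβ hβ hβ2
        have hαB₀ : α ∈ B₀ := by
          have hmem : α ∈ omap (X₁ : Set Ordinal) (X₂ : Set Ordinal) '' B₀ := by
            rw [hB₀]
            exact hαB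
          obtain ⟨v, hvB, hv⟩ := hmem
          have hvX1 : v ∈ (X₁ : Set Ordinal) := hB₀X1 hvB
          rcases lt_trichotomy v α with h | h | h
          · rw [hfix v hvX1 h.le] at hv
            exact absurd hv (ne_of_lt h)
          · rw [← h]
            exact hvB
          · have h2 := omap_strictMonoOn hotpH hα1 hvX1 h
            rw [hfix α hα1 le_rfl, hv] at h2
            exact absurd h2 (lt_irrefl α)
        have hBseg : (B : Set Ordinal) ∩ Set.Iio α = B₀ ∩ Set.Iio α := by
          ext y
          constructor
          · rintro ⟨hyB, hyα⟩
            rw [← hB₀] at hyB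
            obtain ⟨v, hvB, hv⟩ := hyB
            have hvX1 : v ∈ (X₁ : Set Ordinal) := hB₀X1 hvB
            have hvα : v < α := by
              by_contra hge
              push_neg at hge
              have hle : omap (X₁ : Set Ordinal) (X₂ : Set Ordinal) α ≤
                  omap (X₁ : Set Ordinal) (X₂ : Set Ordinal) v := by
                rcases eq_or_lt_of_le hge with rfl | h'
                · exact le_rfl
                · exact (omap_strictMonoOn hotpH hα1 hvX1 h').le
              rw [hfix α hα1 le_rfl, hv] at hle
              exact absurd hyα (not_lt.2 hle)
            have hyv : y = v := by rw [← hv, hfix v hvX1 hvα.le]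
            rw [hyv]
            exact ⟨hvB, hvα⟩
          · rintro ⟨hyB₀, hyα⟩
            refine ⟨?_, hyα⟩
            rw [← hB₀]
            exact ⟨y, hyB₀, hfix y (hB₀X1 hyB₀) hyα.le⟩
        have hrkB₀ : (M.wf.apply (⟨B₀, hB₀mem.1⟩ : M.mu)).rank = (M.wf.apply B).rank :=
          (M.rank_omap X₁ X₂ hr12 ⟨B₀, hB₀mem.1⟩ hB₀mem.2 B hB₀.symm).symm
        have hfinal := IH X₁ h1Z A ⟨B₀, hB₀mem.1⟩ hAss.subset hB₀mem.2.subset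
          (by rw [hrkB₀]; exact hrAB) α hαA hαB₀
        rw [hfinal]
        exact hBseg.symm
    rcases hside X hXss with hX1 | hX2 <;> rcases hside Y hYss with hY1 | hY2
    · exact IH X₁ h1Z X Y hX1 hY1 hrk α hX hY
    · exact cross X Y hX1 hY2 hrk hX hY
    · exact (cross Y X hY1 hX2 hrk.symm hY hX).symm
    · exact IH X₂ h2Z X Y hX2 hY2 hrk α hX hY

end MainInduction

/-- The coherence lemma: elements of a `(κ,κ⁺)`-cardinal of the same rank cohere below any
common element. -/
theorem coherence_lemma (κ : Cardinal) (hκ : κ.IsRegular) (M : TwoCardinal κ)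
    (X Y : M.mu) (hrk : M.rank X = M.rank Y) (α : Ordinal)
    (hX : α ∈ (X : Set Ordinal)) (hY : α ∈ (Y : Set Ordinal)) :
    (X : Set Ordinal) ∩ Set.Iio α = (Y : Set Ordinal) ∩ Set.Iio α := by
  have hwfrk : (M.wf.apply X).rank = (M.wf.apply Y).rank := M.wfrank_eq hrk
  obtain ⟨Zs, hZmu, hXZ, hYZ⟩ := M.directed (X : Set Ordinal) X.2 (Y : Set Ordinal) Y.2
  exact M.coh_main ⟨Zs, hZmu⟩ X Y hXZ hYZ hwfrk α hX hY
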